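/- For i = 1,2,3, the first coefficients F_{i1} in the expansion F_i(λ) = F_{i0} + F_{i1}λ^{−1} + O(λ^{−2}) of the characteristic-polynomial coefficients of L(λ) are: F_{11} = Σ_{k=1}^3 ⟨Φ_k,Ψ_k⟩, F_{21} = Σ_{k=1}^3 (F_{10} − γ_k)⟨Φ_k,Ψ_k⟩, and F_{31} = Σ_{k=1}^3 (F_{20} − γ_k(F_{10} − γ_k))⟨Φ_k,Ψ_k⟩, where F_{10} = γ_1+γ_2+γ_3 and F_{20} = γ_1γ_2+γ_1γ_3+γ_2γ_3. -/
import Mathlib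


open Filter

/-- The coefficients of `λ⁻¹` in the Laurent expansions at `λ = ∞`
of `F₁ = tr L`, `F₂ = ½((tr L)² - tr L²)`, `F₃ = det L` are
`F₁₁ = Σ_k ⟨Φ_k,Ψ_k⟩`, `F₂₁ = Σ_k (F₁₀ - γ_k)⟨Φ_k,Ψ_k⟩`,
`F₃₁ = Σ_k (F₂₀ - γ_k(F₁₀ - γ_k))⟨Φ_k,Ψ_k⟩`, with `F₁₀ = γ₁+γ₂+γ₃`,
`F₂₀ = γ₁γ₂+γ₁γ₃+γ₂γ₃`. -/
theorem stmt15 (N : ℕ) (γ : Fin 3 → ℝ) (lam : Fin N → ℝ)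
    (φ ψ : Fin 3 → Fin N → ℝ)
    (L : ℝ → Matrix (Fin 3) (Fin 3) ℝ)
    (hL : ∀ lamv, L lamv = Matrix.of fun i j =>
      (if i = j then γ i else 0) + ∑ l, φ i l * ψ j l / (lamv - lam l)) :
    Tendsto (fun lamv => lamv * ((L lamv).trace - (γ 0 + γ 1 + γ 2))) atTop
        (nhds (∑ k, ∑ m, φ k m * ψ k m))
    ∧ Tendsto (fun lamv => lamv *
          (1 / 2 * ((L lamv).trace ^ 2 - (L lamv ^ 2).trace)
            - (γ 0 * γ 1 + γ 0 * γ 2 + γ 1 * γ 2))) atTop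
        (nhds (∑ k, ((γ 0 + γ 1 + γ 2) - γ k) * ∑ m, φ k m * ψ k m))
    ∧ Tendsto (fun lamv => lamv * ((L lamv).det - γ 0 * γ 1 * γ 2)) atTop
        (nhds (∑ k, ((γ 0 * γ 1 + γ 0 * γ 2 + γ 1 * γ 2)
            - γ k * ((γ 0 + γ 1 + γ 2) - γ k)) * ∑ m, φ k m * ψ k m)) := by
  set E : Fin 3 → Fin 3 → ℝ → ℝ := fun i j x => ∑ l, φ i l * ψ j l / (x - lam l) with hEdef
  have hL' : ∀ x, L x = Matrix.of fun i j => (if i = j then γ i else 0) + E i j x := hL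
  have htop : ∀ a : ℝ, Tendsto (fun x : ℝ => x - a) atTop atTop := fun a =>
    tendsto_atTop_add_const_right _ (-a) tendsto_id
  have hE0 : ∀ i j, Tendsto (fun x => E i j x) atTop (nhds 0) := by
    intro i j
    have h : Tendsto (fun x => ∑ l, φ i l * ψ j l / (x - lam l)) atTop
        (nhds (∑ _l : Fin N, (0:ℝ))) :=
      tendsto_finset_sum _ fun l _ => Tendsto.div_atTop tendsto_const_nhds (htop _)
    simpa [hEdef] using h
  have hE1 : ∀ i j, Tendsto (fun x => x * E i j x) atTop (nhds (∑ m, φ i m * ψ j m)) := by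
    intro i j
    have h1 : ∀ (c a : ℝ), Tendsto (fun x => x * (c / (x - a))) atTop (nhds c) := by
      intro c a
      have h2 : Tendsto (fun x : ℝ => c + c * a / (x - a)) atTop (nhds (c + 0)) :=
        tendsto_const_nhds.add (Tendsto.div_atTop tendsto_const_nhds (htop a))
      rw [add_zero] at h2
      apply h2.congr'
      filter_upwards [eventually_gt_atTop a] with x hx
      have hne : x - a ≠ 0 := sub_ne_zero.mpr hx.ne'
      field_simp
      ring
    have h : Tendsto (fun x => ∑ l, x * (φ i l * ψ j l / (x - lam l))) atTop
        (nhds (∑ m, φ i m * ψ j m)) := tendsto_finset_sum _ fun l _ => h1 _ _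
    apply h.congr
    intro x
    simp [hEdef, Finset.mul_sum]
  refine ⟨?_, ?_, ?_⟩
  · have p := ((hE1 0 0).add (hE1 1 1)).add (hE1 2 2)
    simp only [Fin.sum_univ_three]
    refine p.congr fun x => ?_
    simp [hL', Matrix.trace, Matrix.diag, Fin.sum_univ_three]
    ring
  · have lin := ((Tendsto.const_mul ((γ 0 + γ 1 + γ 2) - γ 0) (hE1 0 0)).add
        (Tendsto.const_mul ((γ 0 + γ 1 + γ 2) - γ 1) (hE1 1 1))).add
        (Tendsto.const_mul ((γ 0 + γ 1 + γ 2) - γ 2) (hE1 2 2))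
    have q : Tendsto (fun x => (x * E 0 0 x) * E 1 1 x + (x * E 0 0 x) * E 2 2 x
        + (x * E 1 1 x) * E 2 2 x - (x * E 0 1 x) * E 1 0 x - (x * E 0 2 x) * E 2 0 x
        - (x * E 1 2 x) * E 2 1 x) atTop (nhds 0) := by
      have := ((((((hE1 0 0).mul (hE0 1 1)).add ((hE1 0 0).mul (hE0 2 2))).add
        ((hE1 1 1).mul (hE0 2 2))).sub ((hE1 0 1).mul (hE0 1 0))).sub
        ((hE1 0 2).mul (hE0 2 0))).sub ((hE1 1 2).mul (hE0 2 1))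
      simpa using this
    have p := lin.add q
    rw [add_zero] at p
    simp only [Fin.sum_univ_three]
    refine p.congr fun x => ?_
    simp [hL', Matrix.trace, Matrix.diag, Fin.sum_univ_three, pow_two, Matrix.mul_apply]
    ring
  · have lin := ((Tendsto.const_mul ((γ 0 * γ 1 + γ 0 * γ 2 + γ 1 * γ 2)
          - γ 0 * ((γ 0 + γ 1 + γ 2) - γ 0)) (hE1 0 0)).add
        (Tendsto.const_mul ((γ 0 * γ 1 + γ 0 * γ 2 + γ 1 * γ 2)
          - γ 1 * ((γ 0 + γ 1 + γ 2) - γ 1)) (hE1 1 1))).add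
        (Tendsto.const_mul ((γ 0 * γ 1 + γ 0 * γ 2 + γ 1 * γ 2)
          - γ 2 * ((γ 0 + γ 1 + γ 2) - γ 2)) (hE1 2 2))
    have q : Tendsto (fun x =>
        γ 0 * ((x * E 1 1 x) * E 2 2 x) - γ 0 * ((x * E 1 2 x) * E 2 1 x)
        + γ 1 * ((x * E 0 0 x) * E 2 2 x) - γ 1 * ((x * E 0 2 x) * E 2 0 x)
        + γ 2 * ((x * E 0 0 x) * E 1 1 x) - γ 2 * ((x * E 0 1 x) * E 1 0 x)
        + (x * E 0 0 x) * E 1 1 x * E 2 2 x - (x * E 0 0 x) * E 1 2 x * E 2 1 x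
        - (x * E 0 1 x) * E 1 0 x * E 2 2 x + (x * E 0 1 x) * E 1 2 x * E 2 0 x
        + (x * E 0 2 x) * E 1 0 x * E 2 1 x - (x * E 0 2 x) * E 1 1 x * E 2 0 x)
        atTop (nhds 0) := by
      have := (((((((((((Tendsto.const_mul (γ 0) ((hE1 1 1).mul (hE0 2 2))).sub
        (Tendsto.const_mul (γ 0) ((hE1 1 2).mul (hE0 2 1)))).add
        (Tendsto.const_mul (γ 1) ((hE1 0 0).mul (hE0 2 2)))).sub
        (Tendsto.const_mul (γ 1) ((hE1 0 2).mul (hE0 2 0)))).add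
        (Tendsto.const_mul (γ 2) ((hE1 0 0).mul (hE0 1 1)))).sub
        (Tendsto.const_mul (γ 2) ((hE1 0 1).mul (hE0 1 0)))).add
        (((hE1 0 0).mul (hE0 1 1)).mul (hE0 2 2))).sub
        (((hE1 0 0).mul (hE0 1 2)).mul (hE0 2 1))).sub
        (((hE1 0 1).mul (hE0 1 0)).mul (hE0 2 2))).add
        (((hE1 0 1).mul (hE0 1 2)).mul (hE0 2 0))).add
        (((hE1 0 2).mul (hE0 1 0)).mul (hE0 2 1))).sub
        (((hE1 0 2).mul (hE0 1 1)).mul (hE0 2 0))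
      simpa [mul_assoc] using this
    have p := lin.add q
    rw [add_zero] at p
    simp only [Fin.sum_univ_three]
    refine p.congr fun x => ?_
    simp [hL', Matrix.det_fin_three]
    ring
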